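/- arXiv:1008.0376 — 6 statements merged into one kernel-verified Lean document; each statement's English description precedes it below -/
import Mathlib

section
/- For every integer n ≥ 0 and every x ∈ (0, 1], A_n(x) = ∑_{m=n+1}^∞ (1-x)^m / m, where A_n(x) = ∫_x^1 (1-y)^n / y dy. -/
open intervalIntegral Real

lemma aux_intble (n : ℕ) (x : ℝ) (hx : x ∈ Set.Ioc (0:ℝ) 1) :
    IntervalIntegrable (fun y => (1 - y) ^ n / y) MeasureTheory.volume x 1 := by
  apply ContinuousOn.intervalIntegrable
  apply ContinuousOn.div (by fun_prop) (by fun_prop)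
  intro y hy
  rw [Set.uIcc_of_le hx.2] at hy
  exact ne_of_gt (lt_of_lt_of_le hx.1 hy.1)

lemma aux_hasSum (n : ℕ) (x : ℝ) (hx : x ∈ Set.Ioc (0:ℝ) 1) :
    HasSum (fun m : ℕ => (1 - x) ^ (n + 1 + m) / (n + 1 + m))
      (∫ y in x..1, (1 - y) ^ n / y) := by
  obtain ⟨hx0, hx1⟩ := hx
  induction n with
  | zero =>
    have h1 : (∫ y in x..1, (1 - y) ^ 0 / y) = - Real.log x := by
      rw [show (fun y => (1 - y : ℝ) ^ 0 / y) = fun y => 1 / y by funext y; simp]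
      rw [integral_one_div (by intro h; rw [Set.uIcc_of_le hx1] at h; exact absurd h.1 (not_le.2 hx0))]
      simp
    rw [h1]
    have key := hasSum_pow_div_log_of_abs_lt_one (x := 1 - x)
      (by rw [abs_of_nonneg (by linarith)]; linarith)
    simp only [sub_sub_cancel] at key
    convert key using 1
    funext m
    rw [show 0 + 1 + m = m + 1 from by omega]
    push_cast
    ring
  | succ n ih =>
    have hint : (∫ y in x..1, (1 - y) ^ (n + 1) / y)
        = (∫ y in x..1, (1 - y) ^ n / y) - (1 - x) ^ (n + 1) / (n + 1) := by
      have hsplit : (∫ y in x..1, (1 - y) ^ (n + 1) / y)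
          = ∫ y in x..1, ((1 - y) ^ n / y - (1 - y) ^ n) := by
        apply integral_congr
        intro y hy
        rw [Set.uIcc_of_le hx1] at hy
        have hy0 : y ≠ 0 := ne_of_gt (lt_of_lt_of_le hx0 hy.1)
        field_simp
        ring
      rw [hsplit, integral_sub (aux_intble n x ⟨hx0, hx1⟩)
        ((by fun_prop : Continuous fun y : ℝ => (1 - y) ^ n).intervalIntegrable x 1)]
      congr 1
      rw [show (fun y => (1 - y : ℝ) ^ n) = (fun y => ((fun t => t ^ n) (1 - y))) from rfl,
        integral_comp_sub_left (fun t => t ^ n) 1]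
      simp [integral_pow]
    rw [hint]
    have h2 := (hasSum_nat_add_iff'
      (f := fun m : ℕ => (1 - x) ^ (n + 1 + m) / (n + 1 + m)) 1).mpr ih
    simp only [Finset.range_one, Finset.sum_singleton, Nat.add_zero, Nat.cast_zero,
      add_zero] at h2
    convert h2 using 1
    case e'_3 => rfl
    funext m
    rw [show n + 1 + 1 + m = n + 1 + (m + 1) from by omega]
    push_cast
    ring

theorem stmt4 (n : ℕ) (x : ℝ) (hx : x ∈ Set.Ioc (0:ℝ) 1) :
    (∫ y in x..1, (1 - y) ^ n / y) =
      ∑' m : ℕ, (1 - x) ^ (n + 1 + m) / (n + 1 + m) := by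
  exact (aux_hasSum n x hx).tsum_eq.symm
end

section
/- For every real α > 0 and every integer n ≥ 1, the function q(x) = α x^{α-1} / B(α, n) satisfies ∫_0^1 A_{n-1}(x) q(tx) dx = t^{α-1} for all t > 0, where A_{n-1}(x) = ∫_x^1 (1-y)^{n-1}/y dy. -/
open MeasureTheory intervalIntegral Real Set Filter Topology

theorem stmt13 (α : ℝ) (hα : 0 < α) (n : ℕ) (hn : 1 ≤ n)
    (q : ℝ → ℝ)
    (hq : ∀ x, q x = α * x ^ (α - 1) /
      ∫ u in (0:ℝ)..1, u ^ (α - 1) * (1 - u) ^ ((n : ℝ) - 1))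
    (t : ℝ) (ht : 0 < t) :
    (∫ x in (0:ℝ)..1, (∫ y in x..1, (1 - y) ^ (n - 1) / y) * q (t * x)) =
      t ^ (α - 1) := by
  set m := n - 1 with hm
  set f : ℝ → ℝ := fun y => (1 - y) ^ m / y with hf
  set A : ℝ → ℝ := fun x => ∫ y in x..1, f y with hAdef
  -- integrability of f on x..1 for x > 0
  have hf_int : ∀ x : ℝ, 0 < x → IntervalIntegrable f volume x 1 := by
    intro x hx
    apply ContinuousOn.intervalIntegrable
    intro y hy
    have hy0 : y ≠ 0 := by
      rcases le_total x 1 with h | h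
      · rw [uIcc_of_le h] at hy; exact (lt_of_lt_of_le hx hy.1).ne'
      · rw [uIcc_of_ge h] at hy; exact (lt_of_lt_of_le one_pos hy.1).ne'
    exact (ContinuousAt.div (by fun_prop) continuousAt_id hy0).continuousWithinAt
  have hf_meas : StronglyMeasurable f := by
    apply Measurable.stronglyMeasurable; fun_prop
  have hA_deriv : ∀ x : ℝ, 0 < x → HasDerivAt A (-f x) x := by
    intro x hx
    exact integral_hasDerivAt_left (hf_int x hx) hf_meas.stronglyMeasurableAtFilter
      (ContinuousAt.div (by fun_prop) continuousAt_id hx.ne')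
  have hA_nonneg : ∀ x ∈ Ioc (0:ℝ) 1, 0 ≤ A x := by
    intro x hx
    apply intervalIntegral.integral_nonneg hx.2
    intro y hy
    exact div_nonneg (pow_nonneg (by linarith [hy.2]) m) (le_of_lt (lt_of_lt_of_le hx.1 hy.1))
  have hA_le : ∀ x ∈ Ioc (0:ℝ) 1, A x ≤ -Real.log x := by
    intro x hx
    have h1 : (∫ y in x..1, 1 / y) = -Real.log x := by
      rw [integral_one_div]
      · rw [one_div, Real.log_inv]
      · rw [uIcc_of_le hx.2]; intro h; exact absurd h.1 (not_le.2 hx.1)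
    rw [← h1]
    apply intervalIntegral.integral_mono_on hx.2 (hf_int x hx.1)
    · apply ContinuousOn.intervalIntegrable
      intro y hy
      rw [uIcc_of_le hx.2] at hy
      exact (ContinuousAt.div continuousAt_const continuousAt_id
        (lt_of_lt_of_le hx.1 hy.1).ne').continuousWithinAt
    · intro y hy
      have hy0 : 0 < y := lt_of_lt_of_le hx.1 hy.1
      have hb : (1 - y) ^ m ≤ 1 :=
        pow_le_one₀ (by linarith [hy.2]) (by linarith [hy.1, hx.1])
      show (1 - y) ^ m / y ≤ 1 / y
      gcongr
  -- the function g
  set g : ℝ → ℝ := fun x => x ^ α * A x with hgdef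
  have hg0 : g 0 = 0 := by
    simp [hgdef, Real.zero_rpow hα.ne']
  have hg1 : g 1 = 0 := by
    simp [hgdef, hAdef, intervalIntegral.integral_same]
  have hg_cont : ContinuousOn g (Icc 0 1) := by
    intro x hx
    rcases eq_or_lt_of_le hx.1 with h0 | h0
    · -- continuity at 0 within Icc 0 1
      rw [← h0]
      have hIcc : Icc (0:ℝ) 1 = {0} ∪ Ioc 0 1 := by
        ext z; simp [Icc, Ioc, le_iff_lt_or_eq]; constructor
        · rintro ⟨h1 | h1, h2⟩
          · exact Or.inr ⟨h1, h2⟩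
          · exact Or.inl h1.symm
        · rintro (h1 | ⟨h1, h2⟩)
          · exact ⟨Or.inr h1.symm, by simp [h1]⟩
          · exact ⟨Or.inl h1, h2⟩
      unfold ContinuousWithinAt
      rw [hIcc, nhdsWithin_union, tendsto_sup, hg0]
      constructor
      · rw [nhdsWithin_singleton]
        simpa [hg0] using (tendsto_pure_nhds g 0)
      · -- squeeze on Ioc
        have hupper : Tendsto (fun x : ℝ => -(Real.log x * x ^ α)) (𝓝[Ioc 0 1] 0) (𝓝 0) := by
          have := (tendsto_log_mul_rpow_nhdsGT_zero hα).neg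
          rw [neg_zero] at this
          exact this.mono_left (nhdsWithin_mono _ Ioc_subset_Ioi_self)
        apply squeeze_zero' ?_ ?_ hupper
        · filter_upwards [self_mem_nhdsWithin] with x hx
          exact mul_nonneg (Real.rpow_nonneg hx.1.le α) (hA_nonneg x hx)
        · filter_upwards [self_mem_nhdsWithin] with x hx
          have := mul_le_mul_of_nonneg_left (hA_le x hx) (Real.rpow_nonneg hx.1.le α)
          calc g x ≤ x ^ α * (-Real.log x) := this
            _ = -(Real.log x * x ^ α) := by ring
    · -- continuity at x > 0
      apply ContinuousAt.continuousWithinAt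
      exact (Real.continuousAt_rpow_const x α (Or.inl h0.ne')).mul (hA_deriv x h0).continuousAt
  have hg_deriv : ∀ x ∈ Ioo (0:ℝ) 1,
      HasDerivAt g (α * x ^ (α - 1) * A x - x ^ (α - 1) * (1 - x) ^ m) x := by
    intro x hx
    have h1 : HasDerivAt (fun x : ℝ => x ^ α) (α * x ^ (α - 1)) x := by
      simpa [mul_comm] using Real.hasDerivAt_rpow_const (p := α) (Or.inl hx.1.ne')
    have := h1.mul (hA_deriv x hx.1)
    refine HasDerivAt.congr_deriv this ?_
    have hxx : x ^ α * (f x) = x ^ (α - 1) * (1 - x) ^ m := by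
      simp only [hf]
      rw [Real.rpow_sub hx.1, Real.rpow_one]
      field_simp
    rw [← hxx]; ring
  -- integrability of the two pieces
  have hI2 : IntervalIntegrable (fun x : ℝ => x ^ (α - 1) * (1 - x) ^ m) volume 0 1 := by
    apply (intervalIntegral.intervalIntegrable_rpow' (by linarith)).mul_continuousOn
    fun_prop
  have hI1 : IntervalIntegrable (fun x : ℝ => α * x ^ (α - 1) * A x) volume 0 1 := by
    rw [intervalIntegrable_iff_integrableOn_Ioc_of_le zero_le_one]
    have hbound : IntegrableOn (fun x : ℝ => (2 / α) * α * x ^ (α / 2 - 1)) (Ioc 0 1) := by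
      have := intervalIntegral.intervalIntegrable_rpow' (a := 0) (b := 1)
        (r := α / 2 - 1) (by linarith)
      rw [intervalIntegrable_iff_integrableOn_Ioc_of_le zero_le_one] at this
      exact this.const_mul _
    apply Integrable.mono hbound
    · apply ContinuousOn.aestronglyMeasurable _ measurableSet_Ioc
      intro x hx
      apply ContinuousAt.continuousWithinAt
      exact (continuousAt_const.mul (Real.continuousAt_rpow_const x _ (Or.inl hx.1.ne'))).mul
        (hA_deriv x hx.1).continuousAt
    · rw [ae_restrict_iff' measurableSet_Ioc]
      filter_upwards with x hx
      have hx0 := hx.1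
      have hAx := hA_nonneg x hx
      have h1 : ‖α * x ^ (α - 1) * A x‖ = α * x ^ (α - 1) * A x := by
        rw [Real.norm_eq_abs, abs_of_nonneg]
        exact mul_nonneg (mul_nonneg hα.le (Real.rpow_nonneg hx0.le _)) hAx
      have hlog : -Real.log x ≤ (2 / α) * x ^ (-(α / 2)) := by
        have := Real.log_le_rpow_div (x := x⁻¹) (ε := α / 2) (inv_nonneg.2 hx0.le) (by linarith)
        rw [Real.log_inv, Real.inv_rpow hx0.le, ← Real.rpow_neg hx0.le] at this
        calc -Real.log x ≤ x ^ (-(α / 2)) / (α / 2) := this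
          _ = (2 / α) * x ^ (-(α / 2)) := by field_simp
      have h2 : α * x ^ (α - 1) * A x ≤ α * x ^ (α - 1) * (-Real.log x) :=
        mul_le_mul_of_nonneg_left (hA_le x hx)
          (mul_nonneg hα.le (Real.rpow_nonneg hx0.le _))
      have h3 : α * x ^ (α - 1) * (-Real.log x) ≤
          α * x ^ (α - 1) * ((2 / α) * x ^ (-(α / 2))) :=
        mul_le_mul_of_nonneg_left hlog (mul_nonneg hα.le (Real.rpow_nonneg hx0.le _))
      have h4 : α * x ^ (α - 1) * ((2 / α) * x ^ (-(α / 2))) =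
          (2 / α) * α * x ^ (α / 2 - 1) := by
        rw [show (α / 2 - 1 : ℝ) = (α - 1) + -(α / 2) by ring, Real.rpow_add hx0]
        ring
      have h5 : ‖(2 / α) * α * x ^ (α / 2 - 1)‖ = (2 / α) * α * x ^ (α / 2 - 1) := by
        rw [Real.norm_eq_abs, abs_of_nonneg]
        positivity
      rw [h1, h5]
      linarith
  -- FTC
  have hftc : (∫ x in (0:ℝ)..1,
      (α * x ^ (α - 1) * A x - x ^ (α - 1) * (1 - x) ^ m)) = g 1 - g 0 := by
    apply intervalIntegral.integral_eq_sub_of_hasDeriv_right_of_le zero_le_one hg_cont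
      (fun x hx => (hg_deriv x hx).hasDerivWithinAt) (hI1.sub hI2)
  rw [hg1, hg0, sub_zero, intervalIntegral.integral_sub hI1 hI2, sub_eq_zero] at hftc
  -- identify B
  set B : ℝ := ∫ u in (0:ℝ)..1, u ^ (α - 1) * (1 - u) ^ ((n : ℝ) - 1) with hBdef
  have hexp : ((n : ℝ) - 1) = ((m : ℕ) : ℝ) := by
    rw [hm, Nat.cast_sub hn, Nat.cast_one]
  have hBeq : B = ∫ x in (0:ℝ)..1, x ^ (α - 1) * (1 - x) ^ m := by
    rw [hBdef]
    congr 1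
    ext u
    rw [hexp, Real.rpow_natCast]
  have hBpos : (0:ℝ) < B := by
    rw [hBeq]
    apply intervalIntegral.intervalIntegral_pos_of_pos_on hI2 _ one_pos
    intro x hx
    exact mul_pos (Real.rpow_pos_of_pos hx.1 _) (pow_pos (by linarith [hx.2]) m)
  -- main computation
  have hB' : (∫ x in (0:ℝ)..1, α * x ^ (α - 1) * A x) = B := by
    rw [hftc, hBeq]
  simp only [hq, ← hBdef]
  rw [intervalIntegral.integral_of_le zero_le_one]
  have hcongr : ∫ x in Ioc (0:ℝ) 1, A x * (α * (t * x) ^ (α - 1) / B) =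
      ∫ x in Ioc (0:ℝ) 1, (t ^ (α - 1) / B) * (α * x ^ (α - 1) * A x) := by
    apply setIntegral_congr_fun measurableSet_Ioc
    intro x hx
    show A x * (α * (t * x) ^ (α - 1) / B) = t ^ (α - 1) / B * (α * x ^ (α - 1) * A x)
    rw [Real.mul_rpow ht.le hx.1.le]
    ring
  rw [hcongr, MeasureTheory.integral_const_mul, ← intervalIntegral.integral_of_le zero_le_one,
    hB', div_mul_cancel₀ _ hBpos.ne']
end

section
/- For every real α > 0 and integer n ≥ 1, the function q(t) = α t^{α-1}/B(α,n) satisfies ∫_0^∞ q(t) ln(1 + t^{-2α}) dt = π α ∏_{k=1}^{n-1} (1 + α/k). -/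
open Real MeasureTheory Set Filter Topology Nat

lemma aux_inv (y : ℝ) (hy : 0 < y) : y ^ (-2:ℝ) = (y^2)⁻¹ := by
  rw [Real.rpow_neg hy.le, show (2:ℝ)=((2:ℕ):ℝ) by norm_num, Real.rpow_natCast]

lemma aux_deriv (y : ℝ) (hy : 0 < y) :
    HasDerivAt (fun y : ℝ => y * Real.log (1 + y ^ (-2:ℝ)) + 2 * Real.arctan y)
      (Real.log (1 + y ^ (-2:ℝ))) y := by
  have hpos : 0 < 1 + y ^ (-2:ℝ) := by
    have := Real.rpow_pos_of_pos hy (-2); linarith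
  have h1 : HasDerivAt (fun y : ℝ => y ^ (-2:ℝ)) (-2 * y ^ (-2-1:ℝ)) y :=
    Real.hasDerivAt_rpow_const (Or.inl hy.ne')
  have h2 : HasDerivAt (fun y : ℝ => 1 + y ^ (-2:ℝ)) (-2 * y ^ (-2-1:ℝ)) y := by
    have := (hasDerivAt_const y (1:ℝ)).add h1
    rw [zero_add] at this
    exact this
  have h3 := h2.log hpos.ne'
  have h4 := (hasDerivAt_id y).mul h3
  have h5 := (Real.hasDerivAt_arctan y).const_mul 2
  have h6 := h4.add h5
  refine h6.congr_deriv ?_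
  simp only [id_eq]
  have e1 : y ^ (-2-1:ℝ) = (y^3)⁻¹ := by
    rw [show (-2-1:ℝ) = -(3:ℝ) by norm_num, Real.rpow_neg hy.le,
      show (3:ℝ)=((3:ℕ):ℝ) by norm_num, Real.rpow_natCast]
  rw [e1, aux_inv y hy]
  have h2' : (1:ℝ) + (y^2)⁻¹ ≠ 0 := by positivity
  have h3' : (1:ℝ) + y^2 ≠ 0 := by positivity
  field_simp
  ring

lemma aux_F0 : (0:ℝ) * Real.log (1 + (0:ℝ) ^ (-2:ℝ)) + 2 * Real.arctan 0 = 0 := by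
  simp

lemma aux_tendsto_top :
    Tendsto (fun y : ℝ => y * Real.log (1 + y ^ (-2:ℝ)) + 2 * Real.arctan y)
      atTop (𝓝 π) := by
  have h1 : Tendsto (fun y : ℝ => y * Real.log (1 + y ^ (-2:ℝ))) atTop (𝓝 0) := by
    apply squeeze_zero' (g := fun y : ℝ => y⁻¹)
    · filter_upwards [Filter.Ioi_mem_atTop (0:ℝ)] with y hy
      have hy0 : (0:ℝ) < y := hy
      have h := Real.rpow_pos_of_pos hy0 (-2)
      have hl : 0 ≤ Real.log (1 + y ^ (-2:ℝ)) := Real.log_nonneg (by linarith)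
      exact mul_nonneg hy0.le hl
    · filter_upwards [Filter.Ioi_mem_atTop (0:ℝ)] with y hy
      have hy0 : (0:ℝ) < y := hy
      have hb : Real.log (1 + y ^ (-2:ℝ)) ≤ y ^ (-2:ℝ) := by
        have := Real.log_le_sub_one_of_pos
          (show (0:ℝ) < 1 + y ^ (-2:ℝ) by have := Real.rpow_pos_of_pos hy0 (-2); linarith)
        linarith
      calc y * Real.log (1 + y ^ (-2:ℝ)) ≤ y * y ^ (-2:ℝ) :=
            mul_le_mul_of_nonneg_left hb hy0.le
        _ = y⁻¹ := by
            rw [aux_inv y hy0, sq]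
            field_simp
    · exact tendsto_inv_atTop_zero
  have h2 : Tendsto (fun y : ℝ => 2 * Real.arctan y) atTop (𝓝 π) := by
    have h := (tendsto_nhds_of_tendsto_nhdsWithin Real.tendsto_arctan_atTop).const_mul (2:ℝ)
    rw [show 2 * (π/2) = π by ring] at h
    exact h
  simpa using h1.add h2

lemma aux_cont0 :
    ContinuousWithinAt (fun y : ℝ => y * Real.log (1 + y ^ (-2:ℝ)) + 2 * Real.arctan y)
      (Set.Ici 0) 0 := by
  have hF0 := aux_F0
  rw [ContinuousWithinAt]
  rw [hF0]
  rw [show Set.Ici (0:ℝ) = insert 0 (Set.Ioi 0) from Set.Ioi_insert.symm]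
  rw [nhdsWithin_insert]
  rw [Filter.tendsto_sup]
  constructor
  · rw [Filter.tendsto_pure_left]
    intro s hs
    simpa [hF0] using mem_of_mem_nhds hs
  · have h2 : Tendsto (fun y : ℝ => 2 * Real.arctan y) (𝓝[>] (0:ℝ)) (𝓝 0) := by
      have : Continuous (fun y : ℝ => 2 * Real.arctan y) :=
        continuous_const.mul Real.continuous_arctan
      simpa using (this.tendsto 0).mono_left nhdsWithin_le_nhds
    have h1 : Tendsto (fun y : ℝ => y * Real.log (1 + y ^ (-2:ℝ))) (𝓝[>] (0:ℝ)) (𝓝 0) := by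
      apply squeeze_zero' (g := fun y : ℝ => y * Real.log 2 - 2 * (Real.log y * y))
      · filter_upwards [self_mem_nhdsWithin] with y hy
        have hy0 : (0:ℝ) < y := hy
        have hl : 0 ≤ Real.log (1 + y ^ (-2:ℝ)) := Real.log_nonneg
          (by have := Real.rpow_pos_of_pos hy0 (-2); linarith)
        exact mul_nonneg hy0.le hl
      · filter_upwards [Ioo_mem_nhdsGT_of_mem (Set.mem_Ico.2 ⟨le_refl 0, zero_lt_one⟩)]
          with y hy
        have hy0 : (0:ℝ) < y := hy.1
        have hy1 : y < 1 := hy.2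
        have hr : (0:ℝ) < y ^ (-2:ℝ) := Real.rpow_pos_of_pos hy0 (-2)
        have h1le : (1:ℝ) ≤ y ^ (-2:ℝ) := by
          rw [aux_inv y hy0]
          rw [one_le_inv_iff₀]
          constructor
          · positivity
          · nlinarith
        have hlog : Real.log (1 + y ^ (-2:ℝ)) ≤ Real.log 2 - 2 * Real.log y := by
          calc Real.log (1 + y ^ (-2:ℝ)) ≤ Real.log (2 * y ^ (-2:ℝ)) := by
                apply Real.log_le_log (by linarith)
                linarith
            _ = Real.log 2 - 2 * Real.log y := by
                rw [Real.log_mul two_ne_zero hr.ne', Real.log_rpow hy0]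
                ring
        calc y * Real.log (1 + y ^ (-2:ℝ)) ≤ y * (Real.log 2 - 2 * Real.log y) :=
              mul_le_mul_of_nonneg_left hlog hy0.le
          _ = y * Real.log 2 - 2 * (Real.log y * y) := by ring
      · have ha : Tendsto (fun y : ℝ => y * Real.log 2) (𝓝[>] (0:ℝ)) (𝓝 0) := by
          have : Continuous (fun y : ℝ => y * Real.log 2) := continuous_id.mul continuous_const
          simpa using (this.tendsto 0).mono_left nhdsWithin_le_nhds
        have hb : Tendsto (fun y : ℝ => 2 * (Real.log y * y)) (𝓝[>] (0:ℝ)) (𝓝 0) := by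
          have := tendsto_log_mul_rpow_nhdsGT_zero zero_lt_one
          simp only [Real.rpow_one] at this
          simpa using this.const_mul (2:ℝ)
        simpa using ha.sub hb
    simpa using h1.add h2

lemma aux_contOn : ContinuousOn (fun y : ℝ => Real.log (1 + y ^ (-2:ℝ))) (Set.Ioi 0) := by
  intro y hy
  have hy0 : (0:ℝ) < y := hy
  have h1 : ContinuousAt (fun y : ℝ => 1 + y ^ (-2:ℝ)) y :=
    continuousAt_const.add (Real.continuousAt_rpow_const y (-2) (Or.inl hy0.ne'))
  have h2 : (0:ℝ) < 1 + y ^ (-2:ℝ) := by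
    have := Real.rpow_pos_of_pos hy0 (-2); linarith
  exact (h1.log h2.ne').continuousWithinAt

lemma aux_integrable :
    IntegrableOn (fun y : ℝ => Real.log (1 + y ^ (-2:ℝ))) (Set.Ioi 0) := by
  rw [← Set.Ioo_union_Ici_eq_Ioi (zero_lt_one)]
  apply IntegrableOn.union
  · -- on Ioo 0 1 , dominated by log 2 + 4 * y ^ (-1/2)
    have hg : IntegrableOn (fun y : ℝ => Real.log 2 + 4 * y ^ (-(1:ℝ)/2)) (Set.Ioo 0 1) := by
      apply Integrable.add
      · exact integrableOn_const measure_Ioo_lt_top.ne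
      · exact ((intervalIntegral.integrableOn_Ioo_rpow_iff zero_lt_one).2 (by norm_num)).const_mul 4
    apply Integrable.mono hg
    · exact ((aux_contOn.mono (Set.Ioo_subset_Ioi_self)).aestronglyMeasurable measurableSet_Ioo)
    · filter_upwards [ae_restrict_mem measurableSet_Ioo] with y hy
      have hy0 : (0:ℝ) < y := hy.1
      have hy1 : y < 1 := hy.2
      have hr : (0:ℝ) < y ^ (-2:ℝ) := Real.rpow_pos_of_pos hy0 (-2)
      have hr2 : (0:ℝ) < y ^ (-(1:ℝ)/2) := Real.rpow_pos_of_pos hy0 _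
      have h1le : (1:ℝ) ≤ y ^ (-2:ℝ) := by
        rw [aux_inv y hy0, one_le_inv_iff₀]
        exact ⟨by positivity, by nlinarith⟩
      have hb : Real.log (1 + y ^ (-2:ℝ)) ≤ Real.log 2 + 4 * y ^ (-(1:ℝ)/2) := by
        calc Real.log (1 + y ^ (-2:ℝ)) ≤ Real.log (2 * y ^ (-2:ℝ)) := by
              apply Real.log_le_log (by linarith); linarith
          _ = Real.log 2 + 4 * Real.log (y ^ (-(1:ℝ)/2)) := by
              rw [Real.log_mul two_ne_zero hr.ne', Real.log_rpow hy0, Real.log_rpow hy0]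
              ring
          _ ≤ Real.log 2 + 4 * y ^ (-(1:ℝ)/2) := by
              have := Real.log_le_sub_one_of_pos hr2
              linarith
      have hnn : 0 ≤ Real.log (1 + y ^ (-2:ℝ)) := Real.log_nonneg (by linarith)
      rw [Real.norm_eq_abs, Real.norm_eq_abs, abs_of_nonneg hnn]
      exact hb.trans (le_abs_self _)
  · -- on Ici 1, dominated by y ^ (-2)
    rw [integrableOn_Ici_iff_integrableOn_Ioi]
    have hg : IntegrableOn (fun y : ℝ => y ^ (-2:ℝ)) (Set.Ioi 1) :=
      integrableOn_Ioi_rpow_of_lt (by norm_num) zero_lt_one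
    apply Integrable.mono hg
    · exact ((aux_contOn.mono (fun y (hy : y ∈ Set.Ioi (1:ℝ)) => (lt_trans zero_lt_one hy : (0:ℝ) < y))).aestronglyMeasurable
        measurableSet_Ioi)
    · filter_upwards [ae_restrict_mem measurableSet_Ioi] with y hy
      have hy1 : (1:ℝ) < y := hy
      have hy0 : (0:ℝ) < y := lt_trans zero_lt_one hy1
      have hr : (0:ℝ) < y ^ (-2:ℝ) := Real.rpow_pos_of_pos hy0 (-2)
      have hb : Real.log (1 + y ^ (-2:ℝ)) ≤ y ^ (-2:ℝ) := by
        have := Real.log_le_sub_one_of_pos (show (0:ℝ) < 1 + y ^ (-2:ℝ) by linarith)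
        linarith
      have hnn : 0 ≤ Real.log (1 + y ^ (-2:ℝ)) := Real.log_nonneg (by linarith)
      rw [Real.norm_eq_abs, Real.norm_eq_abs, abs_of_nonneg hnn]
      exact hb.trans (le_abs_self _)

lemma aux_int_pi : ∫ y in Set.Ioi (0:ℝ), Real.log (1 + y ^ (-2:ℝ)) = π := by
  have := integral_Ioi_of_hasDerivAt_of_tendsto (a := 0)
    (f := fun y : ℝ => y * Real.log (1 + y ^ (-2:ℝ)) + 2 * Real.arctan y)
    (f' := fun y : ℝ => Real.log (1 + y ^ (-2:ℝ)))
    aux_cont0 (fun y hy => aux_deriv y hy) aux_integrable aux_tendsto_top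
  rw [this]
  simp

lemma aux_prod_fact (m : ℕ) :
    ∏ k ∈ Finset.Icc 1 m, (k:ℝ) = m ! := by
  rw [← Nat.cast_prod, ← Finset.Ico_add_one_right_eq_Icc, Finset.prod_Ico_id_eq_factorial]

lemma aux_prod_split (α : ℝ) (m : ℕ) :
    ∏ j ∈ Finset.range (m+1), (α + j) = α * ∏ k ∈ Finset.Icc 1 m, (α + k) := by
  rw [Finset.prod_range_succ']
  rw [← Finset.Ico_add_one_right_eq_Icc, Finset.prod_Ico_eq_prod_range]
  simp only [Nat.cast_zero, add_zero, Nat.add_sub_cancel]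
  rw [mul_comm]
  congr 1
  apply Finset.prod_congr rfl
  intro i _
  push_cast
  ring

lemma aux_beta (α : ℝ) (hα : 0 < α) (m : ℕ) :
    ∫ u in (0:ℝ)..1, u ^ (α - 1) * (1 - u) ^ ((m : ℝ)) =
      m ! / (α * ∏ k ∈ Finset.Icc 1 m, (α + k)) := by
  have hre : 0 < Complex.re (α : ℂ) := by simpa using hα
  have hb := Complex.betaIntegral_eval_nat_add_one_right hre m
  have hcast : ((∫ u in (0:ℝ)..1, u ^ (α - 1) * (1 - u) ^ ((m : ℝ)) : ℝ) : ℂ) =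
      Complex.betaIntegral (α : ℂ) ((m : ℂ) + 1) := by
    rw [Complex.betaIntegral, ← intervalIntegral.integral_ofReal]
    apply intervalIntegral.integral_congr
    intro x hx
    rw [Set.uIcc_of_le zero_le_one] at hx
    have hx0 : (0:ℝ) ≤ x := hx.1
    have hx1 : (0:ℝ) ≤ 1 - x := by linarith [hx.2]
    simp only [Complex.ofReal_mul]
    rw [Complex.ofReal_cpow hx0, Complex.ofReal_cpow hx1]
    push_cast
    ring_nf
  have := hb ▸ hcast
  rw [show (m ! / (α * ∏ k ∈ Finset.Icc 1 m, (α + k)) : ℝ) =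
      ((m ! : ℝ) / ∏ j ∈ Finset.range (m+1), (α + j)) by
    rw [aux_prod_split]]
  apply Complex.ofReal_injective
  rw [this]
  push_cast
  rfl

theorem stmt14 (α : ℝ) (hα : 0 < α) (n : ℕ) (hn : 1 ≤ n)
    (q : ℝ → ℝ)
    (hq : ∀ t, q t = α * t ^ (α - 1) /
      ∫ u in (0:ℝ)..1, u ^ (α - 1) * (1 - u) ^ ((n : ℝ) - 1)) :
    (∫ t in Set.Ioi (0:ℝ), q t * Real.log (1 + t ^ (-(2 * α)))) =
      π * α * ∏ k ∈ Finset.Icc 1 (n - 1), (1 + α / k) := by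
  obtain ⟨m, rfl⟩ : ∃ m, n = m + 1 := ⟨n - 1, (Nat.succ_pred_eq_of_pos hn).symm⟩
  simp only [Nat.add_sub_cancel]
  set P : ℝ := ∏ k ∈ Finset.Icc 1 m, (α + k) with hPdef
  have hP : 0 < P := Finset.prod_pos (fun k hk => by
    have : (0:ℝ) ≤ k := Nat.cast_nonneg k
    linarith)
  have hfact : (0:ℝ) < (m ! : ℝ) := by positivity
  have hB : (∫ u in (0:ℝ)..1, u ^ (α - 1) * (1 - u) ^ (((m+1 : ℕ) : ℝ) - 1)) =
      (m ! : ℝ) / (α * P) := by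
    rw [show (((m+1 : ℕ) : ℝ) - 1) = (m : ℝ) by push_cast; ring]
    exact aux_beta α hα m
  have hkey : (∫ t in Set.Ioi (0:ℝ), α * t ^ (α - 1) * Real.log (1 + t ^ (-(2 * α)))) = π := by
    have hsub := integral_comp_rpow_Ioi_of_pos
      (g := fun y : ℝ => Real.log (1 + y ^ (-2:ℝ))) hα
    rw [aux_int_pi] at hsub
    rw [← hsub]
    apply setIntegral_congr_fun measurableSet_Ioi
    intro x hx
    have hx0 : (0:ℝ) < x := hx
    simp only [smul_eq_mul]
    rw [← Real.rpow_mul hx0.le, show α * (-2:ℝ) = -(2*α) by ring]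
  have hprod : ∏ k ∈ Finset.Icc 1 m, (1 + α / (k:ℝ)) = P / (m ! : ℝ) := by
    rw [← aux_prod_fact m, ← Finset.prod_div_distrib]
    apply Finset.prod_congr rfl
    intro k hk
    have hk1 : 1 ≤ k := (Finset.mem_Icc.1 hk).1
    have hk0 : (0:ℝ) < (k:ℝ) := by exact_mod_cast hk1
    field_simp
    ring
  calc (∫ t in Set.Ioi (0:ℝ), q t * Real.log (1 + t ^ (-(2 * α))))
      = ∫ t in Set.Ioi (0:ℝ),
        (α * t ^ (α - 1) * Real.log (1 + t ^ (-(2 * α)))) / ((m ! : ℝ) / (α * P)) := by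
        apply setIntegral_congr_fun measurableSet_Ioi
        intro x _
        simp only [hq, hB]
        ring
    _ = (∫ t in Set.Ioi (0:ℝ), α * t ^ (α - 1) * Real.log (1 + t ^ (-(2 * α)))) /
          ((m ! : ℝ) / (α * P)) := integral_div _ _
    _ = π / ((m ! : ℝ) / (α * P)) := by rw [hkey]
    _ = π * α * (P / (m ! : ℝ)) := by
        rw [div_div_eq_mul_div]
        ring
    _ = π * α * ∏ k ∈ Finset.Icc 1 m, (1 + α / (k:ℝ)) := by rw [hprod]
end

section
/- Let n ≥ 0 be an integer, ε > 0, and let φ be a C^{n+2} function on (0,∞) with φ^{(s)}(t) = O(t^{-s-ε}) as t → ∞ for s = 0,...,n+2 (where φ^{(0)} = φ). Define Φ_n(t) = -d/dt[ ((-t)^{n+1}/n!) φ^{(n+1)}(t) ]. Then for every y > 0, ∫_y^∞ Φ_n(t) A_n(y/t) dt = φ(y), where A_n(x) = ∫_x^1 (1-u)^n/u du. -/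
open Real MeasureTheory Filter Asymptotics

open Set Topology in
private lemma aux_sum_deriv15 (ψ : ℕ → ℝ → ℝ) (y x : ℝ) : ∀ m : ℕ,
    (∀ k, k ≤ m → HasDerivAt (ψ k) (ψ (k+1) x) x) →
    HasDerivAt (fun t => ∑ k ∈ Finset.range (m+1),
        (-1:ℝ)^(m-k) * (t-y)^k / (Nat.factorial k) * ψ k t)
      ((x-y)^m / (Nat.factorial m) * ψ (m+1) x) x := by
  intro m
  induction m with
  | zero =>
    intro h
    have := h 0 le_rfl
    simpa using this
  | succ m ih =>
    intro h
    have hS : (fun t => ∑ k ∈ Finset.range (m+2),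
        (-1:ℝ)^(m+1-k) * (t-y)^k / (Nat.factorial k) * ψ k t)
        = fun t => (-1:ℝ) * (∑ k ∈ Finset.range (m+1),
            (-1:ℝ)^(m-k) * (t-y)^k / (Nat.factorial k) * ψ k t)
          + (t-y)^(m+1) / (Nat.factorial (m+1)) * ψ (m+1) t := by
      funext t
      rw [Finset.sum_range_succ, Finset.mul_sum]
      congr 1
      · refine Finset.sum_congr rfl fun k hk => ?_
        have hk' : k ≤ m := Nat.lt_succ_iff.mp (Finset.mem_range.mp hk)
        have : m + 1 - k = (m - k) + 1 := by omega
        rw [this, pow_succ]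
        ring
      · simp
    rw [hS]
    have h1 := (ih fun k hk => h k (hk.trans (Nat.le_succ m))).const_mul (-1:ℝ)
    have hpow : HasDerivAt (fun t => (t-y)^(m+1) / (Nat.factorial (m+1)))
        ((↑(m+1) * (x-y)^m) / (Nat.factorial (m+1))) x := by
      have := (((hasDerivAt_id x).sub_const y).pow (m+1)).div_const
        ((Nat.factorial (m+1) : ℝ))
      simpa using this
    have h2 := hpow.mul (h (m+1) le_rfl)
    have hcomb := h1.add h2
    refine hcomb.congr_deriv ?_
    symm
    have hm : (Nat.factorial (m+1) : ℝ) = (m+1) * Nat.factorial m := by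
      push_cast [Nat.factorial_succ]; ring
    have hf0 : (Nat.factorial m : ℝ) ≠ 0 := Nat.cast_ne_zero.mpr (Nat.factorial_ne_zero m)
    have hf1 : (Nat.factorial (m+1) : ℝ) ≠ 0 := Nat.cast_ne_zero.mpr (Nat.factorial_ne_zero (m+1))
    rw [hm]
    push_cast
    field_simp
    ring

open Set Topology in
theorem stmt15 (n : ℕ) (ε : ℝ) (hε : 0 < ε) (φ : ℝ → ℝ)
    (hsmooth : ContDiffOn ℝ (n + 2) φ (Set.Ioi 0))
    (hdecay : ∀ s : ℕ, s ≤ n + 2 →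
      (fun t : ℝ => iteratedDeriv s φ t) =O[atTop]
        fun t : ℝ => t ^ (-(s : ℝ) - ε))
    (Φ : ℝ → ℝ)
    (hΦ : ∀ t, Φ t =
      -deriv (fun u : ℝ => (-u) ^ (n + 1) / (Nat.factorial n) *
        iteratedDeriv (n + 1) φ u) t)
    (y : ℝ) (hy : 0 < y) :
    (∫ t in Set.Ioi y, Φ t * ∫ u in (y / t)..1, (1 - u) ^ n / u) = φ y := by
  set A : ℝ → ℝ := fun t => ∫ u in (y/t)..1, (1-u)^n / u with hAdef
  set g : ℝ → ℝ := fun t => (-t) ^ (n+1) / (Nat.factorial n) * iteratedDeriv (n+1) φ t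
    with hgdef
  set g' : ℝ → ℝ := fun t =>
      (↑(n+1) * (-t)^n * (-1)) / (Nat.factorial n) * iteratedDeriv (n+1) φ t
      + (-t)^(n+1) / (Nat.factorial n) * iteratedDeriv (n+2) φ t with hg'def
  set T : ℝ → ℝ := fun t => ∑ k ∈ Finset.range (n+1),
      (-1:ℝ)^(n-k) * (t-y)^k / (Nat.factorial k) * iteratedDeriv k φ t with hTdef
  set G : ℝ → ℝ := fun t => -(g t * A t) + (-1:ℝ)^(n+1) * T t with hGdef
  have hopen : IsOpen (Set.Ioi (0:ℝ)) := isOpen_Ioi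
  have hEqD : ∀ k : ℕ, Set.EqOn (iteratedDerivWithin k φ (Set.Ioi 0))
      (iteratedDeriv k φ) (Set.Ioi 0) := by
    intro k x hx
    rw [iteratedDerivWithin_eq_iteratedFDerivWithin, iteratedDeriv_eq_iteratedFDeriv,
      iteratedFDerivWithin_of_isOpen k hopen hx]
  -- differentiability of iterated derivatives
  have hdiff : ∀ k, k ≤ n+1 → ∀ x : ℝ, 0 < x →
      HasDerivAt (iteratedDeriv k φ) (iteratedDeriv (k+1) φ x) x := by
    intro k hk x hx
    have hDW : DifferentiableOn ℝ (iteratedDerivWithin k φ (Set.Ioi 0)) (Set.Ioi 0) := by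
      apply hsmooth.differentiableOn_iteratedDerivWithin _ hopen.uniqueDiffOn
      exact_mod_cast Nat.lt_succ_of_le hk
    have hev : iteratedDerivWithin k φ (Set.Ioi 0) =ᶠ[𝓝 x] iteratedDeriv k φ :=
      Filter.eventuallyEq_of_mem (hopen.mem_nhds hx) (hEqD k)
    have hDA : DifferentiableAt ℝ (iteratedDeriv k φ) x :=
      (hev.differentiableAt_iff).mp ((hDW x hx).differentiableAt (hopen.mem_nhds hx))
    rw [iteratedDeriv_succ]
    exact hDA.hasDerivAt
  have hcont2 : ContinuousOn (iteratedDeriv (n+2) φ) (Set.Ioi 0) := by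
    have := hsmooth.continuousOn_iteratedDerivWithin (m := n+2) (by norm_cast)
      hopen.uniqueDiffOn
    exact this.congr fun x hx => (hEqD (n+2) hx).symm
  -- derivative of A
  have hAderiv : ∀ t : ℝ, 0 < t → HasDerivAt A ((1 - y/t)^n / t) t := by
    intro t ht
    have hfc : ContinuousOn (fun u : ℝ => (1-u)^n / u) (Set.Ioi 0) := by
      apply ContinuousOn.div
      · fun_prop
      · fun_prop
      · intro u hu; exact ne_of_gt hu
    have hyt : 0 < y / t := div_pos hy ht
    have hInt : IntervalIntegrable (fun u : ℝ => (1-u)^n / u) volume (y/t) 1 := by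
      apply ContinuousOn.intervalIntegrable
      apply hfc.mono
      intro u hu
      rcases hu with ⟨h1, _⟩
      have : (0:ℝ) < min (y/t) 1 := lt_min hyt one_pos
      exact lt_of_lt_of_le this h1
    have hmeas : StronglyMeasurableAtFilter (fun u : ℝ => (1-u)^n / u) (𝓝 (y/t)) := by
      refine ⟨Set.Ioi 0, isOpen_Ioi.mem_nhds hyt, ?_⟩
      exact hfc.aestronglyMeasurable measurableSet_Ioi
    have hcA : ContinuousAt (fun u : ℝ => (1-u)^n / u) (y/t) :=
      hfc.continuousAt (isOpen_Ioi.mem_nhds hyt)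
    have hFTC := intervalIntegral.integral_hasDerivAt_left hInt hmeas hcA
    have hinner : HasDerivAt (fun s : ℝ => y / s) (-y / t^2) t := by
      have h := (hasDerivAt_inv (ne_of_gt ht)).const_mul y
      have heq : (fun s : ℝ => y * s⁻¹) = fun s : ℝ => y / s := by
        funext s; rw [mul_comm, div_eq_mul_inv, mul_comm]
      rw [heq] at h
      refine h.congr_deriv ?_
      symm
      field_simp
    have hcomp := HasDerivAt.comp t hFTC hinner
    refine hcomp.congr_deriv ?_
    symm
    field_simp
  -- derivative of g
  have hgderiv : ∀ t : ℝ, 0 < t → HasDerivAt g (g' t) t := by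
    intro t ht
    have hp : HasDerivAt (fun u : ℝ => (-u)^(n+1) / (Nat.factorial n))
        ((↑(n+1) * (-t)^n * (-1)) / (Nat.factorial n)) t := by
      have := (((hasDerivAt_id t).neg).pow (n+1)).div_const ((Nat.factorial n : ℝ))
      simpa using this
    have h := hp.mul (hdiff (n+1) le_rfl t ht)
    exact h
  have hΦeq : ∀ t : ℝ, 0 < t → Φ t = -g' t := by
    intro t ht
    rw [hΦ t]
    exact congrArg Neg.neg (hgderiv t ht).deriv
  -- derivative of T
  have hTderiv : ∀ t : ℝ, 0 < t →
      HasDerivAt T ((t-y)^n / (Nat.factorial n) * iteratedDeriv (n+1) φ t) t := by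
    intro t ht
    exact aux_sum_deriv15 (fun k => iteratedDeriv k φ) y t n
      (fun k hk => hdiff k (hk.trans (Nat.le_succ n)) t ht)
  -- derivative of G
  have hGderiv : ∀ t ∈ Set.Ici y, HasDerivAt G (Φ t * A t) t := by
    intro t ht
    have ht0 : 0 < t := lt_of_lt_of_le hy ht
    have h1 := ((hgderiv t ht0).mul (hAderiv t ht0)).neg
    have h2 := (hTderiv t ht0).const_mul ((-1:ℝ)^(n+1))
    have hcomb := h1.add h2
    refine hcomb.congr_deriv ?_
    symm
    rw [hΦeq t ht0]
    have hkey : g t * ((1 - y/t)^n / t)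
        = (-1:ℝ)^(n+1) * ((t-y)^n / (Nat.factorial n) * iteratedDeriv (n+1) φ t) := by
      rw [hgdef]
      have h1' : 1 - y/t = (t-y)/t := by field_simp
      have hf : (Nat.factorial n : ℝ) ≠ 0 := Nat.cast_ne_zero.mpr (Nat.factorial_ne_zero n)
      simp only
      rw [h1', div_pow, neg_pow]
      field_simp
      ring
    linear_combination hkey
  -- pointwise bounds on A
  have hAbd : ∀ t : ℝ, y ≤ t → 1 ≤ t → A t ∈ Set.Icc 0 (log t - log y) := by
    intro t hty ht1
    have ht : 0 < t := lt_of_lt_of_le one_pos ht1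
    have hyt : 0 < y / t := div_pos hy ht
    have hyt1 : y / t ≤ 1 := (div_le_one ht).mpr hty
    have hsub : Set.Icc (y/t) 1 ⊆ Set.Ioi 0 := fun u hu => lt_of_lt_of_le hyt hu.1
    have hInt : IntervalIntegrable (fun u : ℝ => (1-u)^n / u) volume (y/t) 1 := by
      apply ContinuousOn.intervalIntegrable
      rw [Set.uIcc_of_le hyt1]
      apply ContinuousOn.div
      · fun_prop
      · fun_prop
      · intro u hu; exact ne_of_gt (hsub hu)
    constructor
    · apply intervalIntegral.integral_nonneg hyt1
      intro u hu
      have hu0 : 0 < u := hsub hu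
      have hu1 : u ≤ 1 := hu.2
      have : (0:ℝ) ≤ (1-u)^n := pow_nonneg (by linarith) n
      positivity
    · have hIntInv : IntervalIntegrable (fun u : ℝ => u⁻¹) volume (y/t) 1 := by
        apply ContinuousOn.intervalIntegrable
        rw [Set.uIcc_of_le hyt1]
        exact continuousOn_inv₀.mono (fun u hu => ne_of_gt (hsub hu))
      have hle := intervalIntegral.integral_mono_on hyt1 hInt hIntInv (fun u hu => by
        have hu0 : 0 < u := hsub hu
        have h1 : (1-u)^n ≤ 1 := pow_le_one₀ (by linarith [hu.2]) (by linarith [hu0])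
        calc (1-u)^n / u ≤ 1 / u := by gcongr
          _ = u⁻¹ := one_div u)
      have hval : (∫ u in (y/t)..1, u⁻¹) = log t - log y := by
        rw [integral_inv_of_pos hyt one_pos]
        rw [one_div, log_inv, log_div (ne_of_gt hy) (ne_of_gt ht)]
        ring
      rw [hval] at hle
      exact hle
  -- big-O machinery
  have hmul : ∀ (k s : ℕ), s ≤ n+2 → ∀ P : ℝ → ℝ,
      (P =O[atTop] fun t : ℝ => t^(k:ℝ)) →
      (fun t => P t * iteratedDeriv s φ t) =O[atTop]
        fun t : ℝ => t^((k:ℝ) - s - ε) := by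
    intro k s hs P hP
    have h := hP.mul (hdecay s hs)
    apply h.congr' EventuallyEq.rfl
    filter_upwards [eventually_gt_atTop (0:ℝ)] with t ht
    rw [← Real.rpow_add ht]
    ring_nf
  have hpoly : ∀ k : ℕ, (fun t : ℝ => (t-y)^k) =O[atTop] fun t => t^(k:ℝ) := by
    intro k
    rw [isBigO_iff]
    refine ⟨2^k, ?_⟩
    filter_upwards [eventually_ge_atTop (max |y| 1)] with t ht
    have ht1 : (1:ℝ) ≤ t := le_trans (le_max_right _ _) ht
    have ht0 : (0:ℝ) < t := lt_of_lt_of_le one_pos ht1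
    have hty : |y| ≤ t := le_trans (le_max_left _ _) ht
    rw [Real.rpow_natCast, Real.norm_eq_abs, Real.norm_eq_abs, abs_pow, abs_pow,
      abs_of_pos ht0, ← mul_pow]
    apply pow_le_pow_left₀ (abs_nonneg _)
    calc |t - y| ≤ |t| + |y| := abs_sub _ _
      _ ≤ t + t := by rw [abs_of_pos ht0]; linarith
      _ = 2 * t := by ring
  have hPg : (fun t : ℝ => (-t)^(n+1) / (Nat.factorial n : ℝ)) =O[atTop]
      fun t => t^((n+1 : ℕ):ℝ) := by
    rw [isBigO_iff]
    refine ⟨1, ?_⟩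
    filter_upwards [eventually_ge_atTop (1:ℝ)] with t ht
    have ht0 : (0:ℝ) < t := lt_of_lt_of_le one_pos ht
    have hfac : (1:ℝ) ≤ (Nat.factorial n : ℝ) := by
      exact_mod_cast Nat.one_le_iff_ne_zero.mpr (Nat.factorial_ne_zero n)
    rw [Real.norm_eq_abs, Real.norm_eq_abs, Real.rpow_natCast, one_mul, abs_div,
      abs_pow, abs_neg, abs_of_pos ht0, Nat.abs_cast, abs_of_pos (pow_pos ht0 _)]
    exact div_le_self (pow_nonneg ht0.le _) hfac
  have hP1 : (fun t : ℝ => (↑(n+1) * (-t)^n * (-1)) / (Nat.factorial n : ℝ)) =O[atTop]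
      fun t => t^((n : ℕ):ℝ) := by
    rw [isBigO_iff]
    refine ⟨n+1, ?_⟩
    filter_upwards [eventually_ge_atTop (1:ℝ)] with t ht
    have ht0 : (0:ℝ) < t := lt_of_lt_of_le one_pos ht
    have hfac : (1:ℝ) ≤ (Nat.factorial n : ℝ) := by
      exact_mod_cast Nat.one_le_iff_ne_zero.mpr (Nat.factorial_ne_zero n)
    have habs : |(↑(n+1) * (-t)^n * (-1) : ℝ) / (Nat.factorial n : ℝ)|
        = (n+1) * t^n / (Nat.factorial n : ℝ) := by
      rw [abs_div, abs_mul, abs_mul, abs_pow, abs_neg, abs_of_pos ht0, Nat.abs_cast,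
        Nat.abs_cast, abs_neg, abs_one, mul_one]
      push_cast
      ring
    rw [Real.norm_eq_abs, Real.norm_eq_abs, Real.rpow_natCast, habs,
      abs_of_pos (pow_pos ht0 _)]
    have hpn : (0:ℝ) ≤ t^n := pow_nonneg ht0.le _
    exact div_le_self (by positivity) hfac
  -- Φ is O(t^(-1-ε))
  have hO1 : (fun t : ℝ => (↑(n+1) * (-t)^n * (-1)) / (Nat.factorial n : ℝ)
      * iteratedDeriv (n+1) φ t) =O[atTop] fun t : ℝ => t^(-1-ε) := by
    have h := hmul n (n+1) (by omega) _ hP1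
    refine h.congr' EventuallyEq.rfl (Eventually.of_forall fun t => ?_)
    norm_num
  have hO2 : (fun t : ℝ => (-t)^(n+1) / (Nat.factorial n : ℝ)
      * iteratedDeriv (n+2) φ t) =O[atTop] fun t : ℝ => t^(-1-ε) := by
    have h := hmul (n+1) (n+2) (by omega) _ hPg
    refine h.congr' EventuallyEq.rfl (Eventually.of_forall fun t => ?_)
    norm_num
  have hg'O : g' =O[atTop] fun t : ℝ => t^(-1-ε) := by
    rw [hg'def]
    exact hO1.add hO2
  have hΦO : Φ =O[atTop] fun t : ℝ => t^(-1-ε) := by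
    have hev : (fun t => -g' t) =ᶠ[atTop] Φ := by
      filter_upwards [eventually_gt_atTop (0:ℝ)] with t ht
      rw [hΦeq t ht]
    exact (hg'O.neg_left).congr' hev EventuallyEq.rfl
  have hgO : g =O[atTop] fun t : ℝ => t^(-ε) := by
    rw [hgdef]
    have h := hmul (n+1) (n+1) (by omega) _ hPg
    refine h.congr' EventuallyEq.rfl (Eventually.of_forall fun t => ?_)
    norm_num
  -- tendsto of t^(-δ) (log t - log y)
  have hloglim : ∀ δ : ℝ, 0 < δ →
      Tendsto (fun t : ℝ => t^(-δ) * (log t - log y)) atTop (𝓝 0) := by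
    intro δ hδ
    have h1 : Tendsto (fun t : ℝ => t^(-δ) * log t) atTop (𝓝 0) := by
      have := (isLittleO_log_rpow_atTop hδ).tendsto_div_nhds_zero
      apply this.congr'
      filter_upwards [eventually_gt_atTop (0:ℝ)] with t ht
      rw [Real.rpow_neg ht.le, div_eq_inv_mul]
    have h2 : Tendsto (fun t : ℝ => t^(-δ) * log y) atTop (𝓝 0) := by
      simpa using (tendsto_rpow_neg_atTop hδ).mul_const (log y)
    have h3 := h1.sub h2
    simp only [sub_zero] at h3 ⊢
    apply h3.congr
    intro t; ring
  -- limit of G at infinity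
  have hGlim : Tendsto G atTop (𝓝 0) := by
    have hgA : Tendsto (fun t => g t * A t) atTop (𝓝 0) := by
      obtain ⟨C, hCpos, hCb⟩ := hgO.exists_pos
      have hC := hCb.bound
      apply squeeze_zero_norm' (a := fun t => C * (t^(-ε) * (log t - log y)))
      · filter_upwards [hC, eventually_ge_atTop (max y 1)] with t h1 h2
        have ht1 : (1:ℝ) ≤ t := le_trans (le_max_right _ _) h2
        have hty : y ≤ t := le_trans (le_max_left _ _) h2
        have ht0 : (0:ℝ) < t := lt_of_lt_of_le one_pos ht1
        have hAb := hAbd t hty ht1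
        have hnorm : ‖(t:ℝ)^(-ε)‖ = t^(-ε) := by
          rw [Real.norm_eq_abs, abs_of_pos (rpow_pos_of_pos ht0 _)]
        rw [norm_mul]
        calc ‖g t‖ * ‖A t‖ ≤ (C * t^(-ε)) * (log t - log y) := by
              apply mul_le_mul
              · rw [← hnorm]; exact h1
              · rw [Real.norm_eq_abs, abs_of_nonneg hAb.1]; exact hAb.2
              · exact norm_nonneg _
              · positivity
          _ = C * (t^(-ε) * (log t - log y)) := by ring
      · simpa using (hloglim ε hε).const_mul C
    have hTlim : Tendsto T atTop (𝓝 0) := by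
      rw [hTdef]
      have hsum := tendsto_finset_sum (Finset.range (n+1))
        (f := fun k => fun t : ℝ =>
          (-1:ℝ)^(n-k) * (t-y)^k / (Nat.factorial k) * iteratedDeriv k φ t)
        (x := atTop) (a := fun _ => (0:ℝ)) ?_
      · simpa using hsum
      · intro k hk
        have hkle : k ≤ n + 2 := by
          have := Finset.mem_range.mp hk; omega
        have hO := hmul k k hkle _ (hpoly k)
        have hOk : (fun t : ℝ => (t-y)^k * iteratedDeriv k φ t) =O[atTop]
            fun t : ℝ => t^(-ε) := by
          refine hO.congr' EventuallyEq.rfl (Eventually.of_forall fun t => ?_)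
          norm_num
        have htd := hOk.trans_tendsto (tendsto_rpow_neg_atTop hε)
        have := htd.const_mul ((-1:ℝ)^(n-k) / (Nat.factorial k : ℝ))
        rw [mul_zero] at this
        apply this.congr
        intro t
        ring
    rw [hGdef]
    have := (hgA.neg).add (hTlim.const_mul ((-1:ℝ)^(n+1)))
    simpa using this
  -- value at y
  have hGy : G y = -φ y := by
    rw [hGdef]
    simp only
    have hA0 : A y = 0 := by
      rw [hAdef]
      simp only
      rw [div_self (ne_of_gt hy), intervalIntegral.integral_same]
    have hT : T y = (-1:ℝ)^n * φ y := by
      rw [hTdef]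
      simp only
      rw [Finset.sum_eq_single 0]
      · simp
      · intro k hk hk0
        simp [sub_self, zero_pow hk0]
      · intro h; simp at h
    rw [hA0, hT]
    have hpow : (-1:ℝ)^(n+1) * (-1)^n = -1 := by
      rw [← pow_add]
      have h2 : n+1+n = 2*n+1 := by ring
      rw [h2]
      exact Odd.neg_one_pow ⟨n, by ring⟩
    calc -(g y * 0) + (-1:ℝ)^(n+1) * ((-1:ℝ)^n * φ y)
        = ((-1:ℝ)^(n+1) * (-1)^n) * φ y := by ring
      _ = -φ y := by rw [hpow]; ring
  -- continuity of the integrand on (0,∞)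
  have hAcont : ContinuousOn A (Set.Ioi 0) :=
    fun t ht => (hAderiv t ht).continuousAt.continuousWithinAt
  have hΦcont : ContinuousOn Φ (Set.Ioi 0) := by
    have hψ1 : ContinuousOn (iteratedDeriv (n+1) φ) (Set.Ioi 0) := fun x hx =>
      ((hdiff (n+1) le_rfl x hx).differentiableAt.continuousAt).continuousWithinAt
    have hg'cont : ContinuousOn g' (Set.Ioi 0) := by
      rw [hg'def]
      apply ContinuousOn.add
      · exact (Continuous.continuousOn (by fun_prop)).mul hψ1
      · exact (Continuous.continuousOn (by fun_prop)).mul hcont2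
    exact (hg'cont.neg).congr fun t ht => hΦeq t ht
  have hfcont : ContinuousOn (fun t => Φ t * A t) (Set.Ioi 0) := hΦcont.mul hAcont
  -- integrability
  have hint : IntegrableOn (fun t => Φ t * A t) (Set.Ioi y) := by
    obtain ⟨C, hCpos, hCb⟩ := hΦO.exists_pos
    have hC := hCb.bound
    have h1le : ∀ᶠ t : ℝ in atTop, t^(-(ε/2)) * (log t - log y) ≤ 1 :=
      (hloglim (ε/2) (by linarith)).eventually_le_const one_pos
    have hbound : ∀ᶠ t : ℝ in atTop, ‖Φ t * A t‖ ≤ C * t^(-1-ε/2) := by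
      filter_upwards [hC, h1le, eventually_ge_atTop (max y 1)] with t h1 h2 h3
      have ht1 : (1:ℝ) ≤ t := le_trans (le_max_right _ _) h3
      have hty : y ≤ t := le_trans (le_max_left _ _) h3
      have ht0 : (0:ℝ) < t := lt_of_lt_of_le one_pos ht1
      have hAb := hAbd t hty ht1
      have hnorm : ‖(t:ℝ)^(-1-ε)‖ = t^(-1-ε) := by
        rw [Real.norm_eq_abs, abs_of_pos (rpow_pos_of_pos ht0 _)]
      have hexp : (t:ℝ)^(-1-ε) = t^(-1-ε/2) * t^(-(ε/2)) := by
        rw [← Real.rpow_add ht0]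
        congr 1
        ring
      rw [norm_mul]
      calc ‖Φ t‖ * ‖A t‖ ≤ (C * t^(-1-ε)) * (log t - log y) := by
            apply mul_le_mul
            · rw [← hnorm]; exact h1
            · rw [Real.norm_eq_abs, abs_of_nonneg hAb.1]; exact hAb.2
            · exact norm_nonneg _
            · positivity
        _ = (C * t^(-1-ε/2)) * (t^(-(ε/2)) * (log t - log y)) := by
            rw [hexp]; ring
        _ ≤ (C * t^(-1-ε/2)) * 1 := by
            apply mul_le_mul_of_nonneg_left h2 (by positivity)
        _ = C * t^(-1-ε/2) := mul_one _
    obtain ⟨a, ha⟩ := eventually_atTop.mp hbound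
    set M : ℝ := max a (max y 1) with hMdef
    have hyM : y ≤ M := le_trans (le_max_left _ _) (le_max_right _ _)
    have hM0 : 0 < M := lt_of_lt_of_le one_pos (le_trans (le_max_right _ _) (le_max_right _ _))
    have hIoc : IntegrableOn (fun t => Φ t * A t) (Set.Ioc y M) := by
      have hIcc : IntegrableOn (fun t => Φ t * A t) (Set.Icc y M) := by
        apply ContinuousOn.integrableOn_Icc
        apply hfcont.mono
        intro t ht
        exact lt_of_lt_of_le hy ht.1
      exact hIcc.mono_set Set.Ioc_subset_Icc_self
    have hIoi : IntegrableOn (fun t => Φ t * A t) (Set.Ioi M) := by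
      apply Integrable.mono' (g := fun t => C * t^(-1-ε/2))
      · exact (integrableOn_Ioi_rpow_of_lt (by linarith) hM0).const_mul C
      · apply (hfcont.mono _).aestronglyMeasurable measurableSet_Ioi
        intro t ht
        exact lt_of_lt_of_le hM0 (le_of_lt ht)
      · rw [ae_restrict_iff' measurableSet_Ioi]
        filter_upwards with t ht
        exact ha t (le_trans (le_max_left _ _) (le_of_lt ht))
    have hun : Set.Ioc y M ∪ Set.Ioi M = Set.Ioi y := Set.Ioc_union_Ioi_eq_Ioi hyM
    rw [← hun]
    exact hIoc.union hIoi
  have hmain := integral_Ioi_of_hasDerivAt_of_tendsto' hGderiv hint hGlim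
  have : (∫ t in Set.Ioi y, Φ t * A t) = φ y := by
    rw [hmain, hGy]
    ring
  exact this
end

section
/- Let n ≥ 0 be an integer, ε > 0, and φ a C^{n+2} function on (0,∞) with φ^{(s)}(t) = O(t^{-s-ε}) as t → ∞ for s = 0,...,n+2, and lim_{t→0+} t^{s+ω} φ^{(s)}(t) = 0 for every ω > 0 and s = 0,...,n+2. Define Φ_n(t) = -d/dt[((-t)^{n+1}/n!) φ^{(n+1)}(t)]. Then for every α with 0 < α < ε, ∫_0^∞ Φ_n(t) t^α dt = -α ∏_{k=1}^n (1 + α/k) · ∫_0^∞ t^α φ'(t) dt. -/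
open Real MeasureTheory Filter Asymptotics Topology

theorem stmt16 (n : ℕ) (ε : ℝ) (hε : 0 < ε) (φ : ℝ → ℝ)
    (hsmooth : ContDiffOn ℝ (n + 2) φ (Set.Ioi 0))
    (hdecay : ∀ s : ℕ, s ≤ n + 2 →
      (fun t : ℝ => iteratedDeriv s φ t) =O[atTop]
        fun t : ℝ => t ^ (-(s : ℝ) - ε))
    (hzero : ∀ ω : ℝ, 0 < ω → ∀ s : ℕ, s ≤ n + 2 →
      Tendsto (fun t : ℝ => t ^ ((s : ℝ) + ω) * iteratedDeriv s φ t)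
        (nhdsWithin 0 (Set.Ioi 0)) (nhds 0))
    (Φ : ℝ → ℝ)
    (hΦ : ∀ t, Φ t =
      -deriv (fun u : ℝ => (-u) ^ (n + 1) / (Nat.factorial n) *
        iteratedDeriv (n + 1) φ u) t)
    (α : ℝ) (hα : 0 < α) (hαε : α < ε) :
    (∫ t in Set.Ioi (0:ℝ), Φ t * t ^ α) =
      -α * (∏ k ∈ Finset.Icc 1 n, (1 + α / k)) *
        ∫ t in Set.Ioi (0:ℝ), t ^ α * deriv φ t := by
  have hIoi : IsOpen (Set.Ioi (0:ℝ)) := isOpen_Ioi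
  have hUD : UniqueDiffOn ℝ (Set.Ioi (0:ℝ)) := hIoi.uniqueDiffOn
  have hEq : ∀ m : ℕ, Set.EqOn (iteratedDerivWithin m φ (Set.Ioi 0))
      (iteratedDeriv m φ) (Set.Ioi 0) := by
    intro m x hx
    have h := iteratedFDerivWithin_of_isOpen (𝕜 := ℝ) (f := φ) m hIoi hx
    simp only [iteratedDerivWithin, iteratedDeriv, h]
  have hDeriv : ∀ m : ℕ, m ≤ n + 1 → ∀ x ∈ Set.Ioi (0:ℝ),
      HasDerivAt (iteratedDeriv m φ) (iteratedDeriv (m+1) φ x) x := by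
    intro m hm x hx
    have h1 : DifferentiableWithinAt ℝ (iteratedDerivWithin m φ (Set.Ioi 0)) (Set.Ioi 0) x :=
      hsmooth.differentiableOn_iteratedDerivWithin
        (by exact_mod_cast (by omega : m < n + 2)) hUD x hx
    have h2 : HasDerivWithinAt (iteratedDerivWithin m φ (Set.Ioi 0))
        (iteratedDerivWithin (m+1) φ (Set.Ioi 0) x) (Set.Ioi 0) x := by
      rw [iteratedDerivWithin_succ]
      exact h1.hasDerivWithinAt
    have h3 := h2.hasDerivAt (hIoi.mem_nhds hx)
    rw [hEq (m+1) hx] at h3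
    exact h3.congr_of_eventuallyEq
      (Filter.eventuallyEq_of_mem (hIoi.mem_nhds hx) (hEq m)).symm
  have hCont : ∀ m : ℕ, m ≤ n + 2 → ContinuousOn (iteratedDeriv m φ) (Set.Ioi 0) := by
    intro m hm
    exact (hsmooth.continuousOn_iteratedDerivWithin (by exact_mod_cast hm) hUD).congr
      fun x hx => (hEq m hx).symm
  have hTop : ∀ m : ℕ, m ≤ n + 2 →
      Tendsto (fun t : ℝ => t ^ ((m:ℝ) + α) * iteratedDeriv m φ t) atTop (𝓝 0) := by
    intro m hm
    have h1 : (fun t : ℝ => t ^ ((m:ℝ) + α) * iteratedDeriv m φ t) =O[atTop]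
        fun t : ℝ => t ^ ((m:ℝ) + α) * t ^ (-(m:ℝ) - ε) :=
      (isBigO_refl (fun t : ℝ => t ^ ((m:ℝ) + α)) atTop).mul (hdecay m hm)
    have h2 : (fun t : ℝ => t ^ ((m:ℝ) + α) * t ^ (-(m:ℝ) - ε)) =ᶠ[atTop]
        fun t : ℝ => t ^ (-(ε - α)) := by
      filter_upwards [eventually_gt_atTop (0:ℝ)] with t ht
      rw [← Real.rpow_add ht, show (m:ℝ) + α + (-(m:ℝ) - ε) = -(ε - α) by ring]
    exact (h1.trans h2.isBigO).trans_tendsto (tendsto_rpow_neg_atTop (by linarith))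
  have hInt : ∀ m : ℕ, 1 ≤ m → m ≤ n + 2 →
      IntegrableOn (fun t : ℝ => t ^ ((m:ℝ) - 1 + α) * iteratedDeriv m φ t) (Set.Ioi 0) := by
    intro m hm1 hm2
    have hfc : ContinuousOn (fun t : ℝ => t ^ ((m:ℝ) - 1 + α) * iteratedDeriv m φ t)
        (Set.Ioi 0) := by
      apply ContinuousOn.mul _ (hCont m hm2)
      exact continuousOn_id.rpow_const fun x hx => Or.inl (ne_of_gt hx)
    obtain ⟨C, hC⟩ := (hdecay m hm2).bound
    obtain ⟨a₀, ha₀⟩ := eventually_atTop.1 hC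
    set a : ℝ := max a₀ 1 with ha
    have ha1 : (1:ℝ) ≤ a := le_max_right _ _
    have ha0 : (0:ℝ) < a := lt_of_lt_of_le one_pos ha1
    have hIa : IntegrableOn (fun t : ℝ => t ^ ((m:ℝ) - 1 + α) * iteratedDeriv m φ t)
        (Set.Ioi a) := by
      have hg : IntegrableOn (fun t : ℝ => C * t ^ (α - 1 - ε)) (Set.Ioi a) :=
        (integrableOn_Ioi_rpow_of_lt (by linarith) ha0).const_mul C
      refine hg.mono' ((hfc.mono fun x hx => lt_trans ha0 hx).aestronglyMeasurable
        measurableSet_Ioi) ?_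
      filter_upwards [ae_restrict_mem measurableSet_Ioi] with t ht
      have ht0 : (0:ℝ) < t := lt_trans ha0 ht
      have hb := ha₀ t (le_of_lt (lt_of_le_of_lt (le_max_left a₀ 1) ht))
      rw [Real.norm_eq_abs, Real.norm_eq_abs, abs_of_pos (Real.rpow_pos_of_pos ht0 _)] at hb
      calc ‖t ^ ((m:ℝ) - 1 + α) * iteratedDeriv m φ t‖
          = t ^ ((m:ℝ) - 1 + α) * |iteratedDeriv m φ t| := by
            rw [norm_mul, Real.norm_eq_abs, Real.norm_eq_abs,
              abs_of_pos (Real.rpow_pos_of_pos ht0 _)]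
        _ ≤ t ^ ((m:ℝ) - 1 + α) * (C * t ^ (-(m:ℝ) - ε)) :=
            mul_le_mul_of_nonneg_left hb (Real.rpow_pos_of_pos ht0 _).le
        _ = C * t ^ (α - 1 - ε) := by
            rw [mul_left_comm, ← Real.rpow_add ht0,
              show ((m:ℝ) - 1 + α) + (-(m:ℝ) - ε) = α - 1 - ε by ring]
    have hz := hzero (α/2) (by linarith) m hm2
    have h1 : ∀ᶠ t in nhdsWithin (0:ℝ) (Set.Ioi 0),
        |t ^ ((m:ℝ) + α/2)| * |iteratedDeriv m φ t| < 1 := by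
      rw [Metric.tendsto_nhds] at hz
      simpa [Real.dist_eq, abs_mul] using hz 1 one_pos
    rw [eventually_nhdsWithin_iff, Metric.eventually_nhds_iff] at h1
    obtain ⟨δ, hδ0, hδ⟩ := h1
    set d : ℝ := min (δ/2) 1 with hd
    have hd0 : (0:ℝ) < d := lt_min (by linarith) one_pos
    have hd1 : d ≤ 1 := min_le_right _ _
    have hId : IntegrableOn (fun t : ℝ => t ^ ((m:ℝ) - 1 + α) * iteratedDeriv m φ t)
        (Set.Ioc 0 d) := by
      have hg : IntegrableOn (fun t : ℝ => t ^ (α/2 - 1)) (Set.Ioc 0 d) := by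
        have h := intervalIntegral.intervalIntegrable_rpow' (a := 0) (b := d)
          (r := α/2 - 1) (by linarith)
        rwa [intervalIntegrable_iff_integrableOn_Ioc_of_le hd0.le] at h
      refine hg.mono' ((hfc.mono Set.Ioc_subset_Ioi_self).aestronglyMeasurable
        measurableSet_Ioc) ?_
      filter_upwards [ae_restrict_mem measurableSet_Ioc] with t ht
      have ht0 : (0:ℝ) < t := ht.1
      have hbb : |t ^ ((m:ℝ) + α/2)| * |iteratedDeriv m φ t| < 1 := by
        refine hδ ?_ ht0
        rw [Real.dist_eq, sub_zero, abs_of_pos ht0]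
        exact lt_of_le_of_lt (le_trans ht.2 (min_le_left _ _)) (by linarith)
      have hp : (0:ℝ) < t ^ ((m:ℝ) + α/2) := Real.rpow_pos_of_pos ht0 _
      rw [abs_of_pos hp] at hbb
      have hb2 : |iteratedDeriv m φ t| ≤ t ^ (-((m:ℝ) + α/2)) := by
        rw [Real.rpow_neg ht0.le, ← one_div, le_div_iff₀ hp]
        calc |iteratedDeriv m φ t| * t ^ ((m:ℝ) + α/2)
            = t ^ ((m:ℝ) + α/2) * |iteratedDeriv m φ t| := mul_comm _ _
          _ ≤ 1 := le_of_lt hbb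
      calc ‖t ^ ((m:ℝ) - 1 + α) * iteratedDeriv m φ t‖
          = t ^ ((m:ℝ) - 1 + α) * |iteratedDeriv m φ t| := by
            rw [norm_mul, Real.norm_eq_abs, Real.norm_eq_abs,
              abs_of_pos (Real.rpow_pos_of_pos ht0 _)]
        _ ≤ t ^ ((m:ℝ) - 1 + α) * t ^ (-((m:ℝ) + α/2)) :=
            mul_le_mul_of_nonneg_left hb2 (Real.rpow_pos_of_pos ht0 _).le
        _ = t ^ (α/2 - 1) := by
            rw [← Real.rpow_add ht0,
              show (m:ℝ) - 1 + α + (-((m:ℝ) + α/2)) = α/2 - 1 by ring]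
    have hIm : IntegrableOn (fun t : ℝ => t ^ ((m:ℝ) - 1 + α) * iteratedDeriv m φ t)
        (Set.Ioc d a) := by
      have hsub : Set.Icc d a ⊆ Set.Ioi 0 := fun x hx => lt_of_lt_of_le hd0 hx.1
      exact ((hfc.mono hsub).integrableOn_Icc).mono_set Set.Ioc_subset_Icc_self
    have hset : Set.Ioi (0:ℝ) = Set.Ioc 0 d ∪ (Set.Ioc d a ∪ Set.Ioi a) := by
      rw [Set.Ioc_union_Ioi_eq_Ioi (hd1.trans ha1), Set.Ioc_union_Ioi_eq_Ioi hd0.le]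
    rw [hset]
    exact hId.union (hIm.union hIa)
  -- splitting of rpow exponents
  have hsplit2 : ∀ (k : ℕ) (t : ℝ), 0 < t → t ^ ((k:ℝ) + α) = t ^ α * t ^ k := by
    intro k t ht0
    rw [← Real.rpow_natCast t k, ← Real.rpow_add ht0, add_comm]
  have hsplit3 : ∀ t : ℝ, 0 < t → t ^ ((n:ℝ) + α) = t ^ (α - 1) * t ^ (n+1) := by
    intro t ht0
    rw [← Real.rpow_natCast t (n+1), ← Real.rpow_add ht0]
    congr 1
    push_cast
    ring
  -- the integration by parts step
  have hStep : ∀ s : ℕ, 1 ≤ s → s ≤ n + 1 →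
      (∫ t in Set.Ioi (0:ℝ), t ^ ((s:ℝ) + α) * iteratedDeriv (s+1) φ t) =
        -((s:ℝ) + α) * ∫ t in Set.Ioi (0:ℝ), t ^ ((s:ℝ) - 1 + α) * iteratedDeriv s φ t := by
    intro s hs1 hs2
    have hu : ∀ x ∈ Set.Ioi (0:ℝ),
        HasDerivAt (fun t : ℝ => t ^ ((s:ℝ) + α)) (((s:ℝ) + α) * x ^ ((s:ℝ) + α - 1)) x :=
      fun x hx => Real.hasDerivAt_rpow_const (Or.inl (ne_of_gt hx))
    have hv : ∀ x ∈ Set.Ioi (0:ℝ),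
        HasDerivAt (iteratedDeriv s φ) (iteratedDeriv (s+1) φ x) x := hDeriv s hs2
    have huv' : IntegrableOn ((fun t : ℝ => t ^ ((s:ℝ) + α)) * iteratedDeriv (s+1) φ)
        (Set.Ioi 0) := by
      have h := hInt (s+1) (by omega) (by omega)
      rw [show ((s+1:ℕ):ℝ) - 1 + α = (s:ℝ) + α by push_cast; ring] at h
      exact h
    have hu'v : IntegrableOn
        ((fun t : ℝ => ((s:ℝ) + α) * t ^ ((s:ℝ) + α - 1)) * iteratedDeriv s φ)
        (Set.Ioi 0) := by
      have h := (hInt s hs1 (by omega)).const_mul ((s:ℝ) + α)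
      refine MeasureTheory.IntegrableOn.congr_fun h ?_ measurableSet_Ioi
      intro t ht
      show ((s:ℝ) + α) * (t ^ ((s:ℝ) - 1 + α) * iteratedDeriv s φ t)
          = (((s:ℝ) + α) * t ^ ((s:ℝ) + α - 1)) * iteratedDeriv s φ t
      rw [show (s:ℝ) + α - 1 = (s:ℝ) - 1 + α by ring]
      ring
    have h0 : Tendsto ((fun t : ℝ => t ^ ((s:ℝ) + α)) * iteratedDeriv s φ)
        (nhdsWithin 0 (Set.Ioi 0)) (𝓝 0) := hzero α hα s (by omega)
    have hinf : Tendsto ((fun t : ℝ => t ^ ((s:ℝ) + α)) * iteratedDeriv s φ) atTop (𝓝 0) :=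
      hTop s (by omega)
    have key := integral_Ioi_mul_deriv_eq_deriv_mul hu hv huv' hu'v h0 hinf
    have key' : (∫ t in Set.Ioi (0:ℝ), t ^ ((s:ℝ) + α) * iteratedDeriv (s+1) φ t)
        = 0 - 0 - ∫ x in Set.Ioi (0:ℝ),
            (((s:ℝ) + α) * x ^ ((s:ℝ) + α - 1)) * iteratedDeriv s φ x := key
    rw [key',
      show (fun x : ℝ => (((s:ℝ) + α) * x ^ ((s:ℝ) + α - 1)) * iteratedDeriv s φ x)
          = fun x : ℝ => ((s:ℝ) + α) * (x ^ ((s:ℝ) - 1 + α) * iteratedDeriv s φ x) by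
        funext x
        rw [show (s:ℝ) + α - 1 = (s:ℝ) - 1 + α by ring]
        ring,
      integral_const_mul]
    ring
  -- iterated consequence
  have hI : ∀ m : ℕ, m ≤ n →
      (∫ t in Set.Ioi (0:ℝ), t ^ ((m:ℝ) + α) * iteratedDeriv (m+1) φ t)
        = (-1:ℝ)^m * (∏ k ∈ Finset.Icc 1 m, ((k:ℝ) + α)) *
          ∫ t in Set.Ioi (0:ℝ), t ^ α * deriv φ t := by
    intro m
    induction m with
    | zero =>
      intro _
      rw [Finset.Icc_eq_empty (by omega), Finset.prod_empty]
      norm_num [iteratedDeriv_one]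
    | succ m ih =>
      intro hm
      have hrec := hStep (m+1) (by omega) (by omega)
      rw [show ((m+1:ℕ):ℝ) - 1 + α = (m:ℝ) + α by push_cast; ring] at hrec
      rw [hrec, ih (by omega), Finset.prod_Icc_succ_top (by omega : 1 ≤ m + 1)]
      push_cast
      ring
  -- derivative of the auxiliary function
  have hFD : ∀ t ∈ Set.Ioi (0:ℝ), HasDerivAt
      (fun u : ℝ => (-u) ^ (n + 1) / (Nat.factorial n) * iteratedDeriv (n + 1) φ u)
      ((((n:ℝ) + 1) * (-t) ^ n * (-1) / (Nat.factorial n)) * iteratedDeriv (n+1) φ t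
        + (-t) ^ (n+1) / (Nat.factorial n) * iteratedDeriv (n+2) φ t) t := by
    intro t ht
    have ha : HasDerivAt (fun u : ℝ => -u) (-1) t := by
      exact hasDerivAt_neg t
    have hb := hasDerivAt_pow (n+1) (-t)
    have h2 : HasDerivAt (fun u : ℝ => (-u) ^ (n+1)) (((n:ℝ) + 1) * (-t) ^ n * (-1)) t := by
      have h1 := hb.comp t ha
      have he : ((n+1 : ℕ):ℝ) * (-t) ^ (n + 1 - 1) * (-1) = ((n:ℝ) + 1) * (-t) ^ n * (-1) := by
        rw [Nat.add_sub_cancel]; push_cast; ring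
      rw [he] at h1
      exact h1
    exact (h2.div_const _).mul (hDeriv (n+1) le_rfl t ht)
  have hΦval : ∀ t ∈ Set.Ioi (0:ℝ), Φ t =
      -(((((n:ℝ) + 1) * (-t) ^ n * (-1) / (Nat.factorial n)) * iteratedDeriv (n+1) φ t
        + (-t) ^ (n+1) / (Nat.factorial n) * iteratedDeriv (n+2) φ t)) := fun t ht => by
    rw [hΦ t, (hFD t ht).deriv]
  have hu0 : ∀ x ∈ Set.Ioi (0:ℝ),
      HasDerivAt (fun t : ℝ => t ^ α) (α * x ^ (α - 1)) x :=
    fun x hx => Real.hasDerivAt_rpow_const (Or.inl (ne_of_gt hx))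
  have huv'0 : IntegrableOn ((fun t : ℝ => t ^ α) *
      (fun t : ℝ => (((n:ℝ) + 1) * (-t) ^ n * (-1) / (Nat.factorial n)) * iteratedDeriv (n+1) φ t
        + (-t) ^ (n+1) / (Nat.factorial n) * iteratedDeriv (n+2) φ t)) (Set.Ioi 0) := by
    have h := ((hInt (n+1) (by omega) (by omega)).const_mul
        (((n:ℝ) + 1) * (-1:ℝ)^n * (-1) / (Nat.factorial n))).add
      ((hInt (n+2) (by omega) (by omega)).const_mul ((-1:ℝ)^(n+1) / (Nat.factorial n)))
    refine MeasureTheory.IntegrableOn.congr_fun h ?_ measurableSet_Ioi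
    intro t ht
    have ht0 : (0:ℝ) < t := ht
    simp only [Pi.mul_apply, Pi.add_apply]
    rw [show ((n+1:ℕ):ℝ) - 1 + α = ((n:ℕ):ℝ) + α by push_cast; ring,
        show ((n+2:ℕ):ℝ) - 1 + α = (((n+1:ℕ)):ℝ) + α by push_cast; ring,
        hsplit2 n t ht0, hsplit2 (n+1) t ht0, neg_pow, neg_pow]
    push_cast
    ring
  have hu'v0 : IntegrableOn ((fun x : ℝ => α * x ^ (α - 1)) *
      (fun u : ℝ => (-u) ^ (n + 1) / (Nat.factorial n) * iteratedDeriv (n + 1) φ u))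
      (Set.Ioi 0) := by
    have h := (hInt (n+1) (by omega) (by omega)).const_mul
      (α * (-1:ℝ)^(n+1) / (Nat.factorial n))
    refine MeasureTheory.IntegrableOn.congr_fun h ?_ measurableSet_Ioi
    intro t ht
    have ht0 : (0:ℝ) < t := ht
    simp only [Pi.mul_apply]
    rw [show ((n+1:ℕ):ℝ) - 1 + α = ((n:ℕ):ℝ) + α by push_cast; ring,
        hsplit3 t ht0, neg_pow]
    ring
  have h00 : Tendsto ((fun t : ℝ => t ^ α) *
      (fun u : ℝ => (-u) ^ (n + 1) / (Nat.factorial n) * iteratedDeriv (n + 1) φ u))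
      (nhdsWithin 0 (Set.Ioi 0)) (𝓝 0) := by
    have h := (hzero α hα (n+1) (by omega)).const_mul ((-1:ℝ)^(n+1) / (Nat.factorial n))
    rw [mul_zero] at h
    refine h.congr' ?_
    filter_upwards [self_mem_nhdsWithin] with t ht
    have ht0 : (0:ℝ) < t := ht
    simp only [Pi.mul_apply]
    rw [hsplit2 (n+1) t ht0, neg_pow]
    ring
  have h0i : Tendsto ((fun t : ℝ => t ^ α) *
      (fun u : ℝ => (-u) ^ (n + 1) / (Nat.factorial n) * iteratedDeriv (n + 1) φ u))
      atTop (𝓝 0) := by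
    have h := (hTop (n+1) (by omega)).const_mul ((-1:ℝ)^(n+1) / (Nat.factorial n))
    rw [mul_zero] at h
    refine h.congr' ?_
    filter_upwards [eventually_gt_atTop (0:ℝ)] with t ht0
    simp only [Pi.mul_apply]
    rw [hsplit2 (n+1) t ht0, neg_pow]
    ring
  have key := integral_Ioi_mul_deriv_eq_deriv_mul hu0 hFD huv'0 hu'v0 h00 h0i
  have key' : (∫ t in Set.Ioi (0:ℝ), t ^ α *
      ((((n:ℝ) + 1) * (-t) ^ n * (-1) / (Nat.factorial n)) * iteratedDeriv (n+1) φ t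
        + (-t) ^ (n+1) / (Nat.factorial n) * iteratedDeriv (n+2) φ t))
      = 0 - 0 - ∫ x in Set.Ioi (0:ℝ),
          (α * x ^ (α - 1)) * ((-x) ^ (n + 1) / (Nat.factorial n) * iteratedDeriv (n + 1) φ x)
      := key
  have hL : (∫ t in Set.Ioi (0:ℝ), Φ t * t ^ α)
      = -∫ t in Set.Ioi (0:ℝ), t ^ α *
        ((((n:ℝ) + 1) * (-t) ^ n * (-1) / (Nat.factorial n)) * iteratedDeriv (n+1) φ t
          + (-t) ^ (n+1) / (Nat.factorial n) * iteratedDeriv (n+2) φ t) := by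
    rw [← integral_neg]
    apply setIntegral_congr_fun measurableSet_Ioi
    intro t ht
    beta_reduce
    rw [hΦval t ht]
    ring
  have hR : (∫ x in Set.Ioi (0:ℝ),
      (α * x ^ (α - 1)) * ((-x) ^ (n + 1) / (Nat.factorial n) * iteratedDeriv (n + 1) φ x))
      = (α * (-1:ℝ)^(n+1) / (Nat.factorial n)) *
        ∫ t in Set.Ioi (0:ℝ), t ^ ((n:ℝ) + α) * iteratedDeriv (n+1) φ t := by
    rw [← integral_const_mul]
    apply setIntegral_congr_fun measurableSet_Ioi
    intro t ht
    have ht0 : (0:ℝ) < t := ht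
    beta_reduce
    rw [hsplit3 t ht0, neg_pow]
    ring
  rw [hL, key', hR, hI n le_rfl]
  have hfact : (∏ k ∈ Finset.Icc 1 n, (k:ℝ)) = (Nat.factorial n : ℝ) := by
    rw [← Nat.cast_prod]
    congr 1
    rw [← Finset.Ico_add_one_right_eq_Icc]
    exact Finset.prod_Ico_id_eq_factorial n
  have hprod : (∏ k ∈ Finset.Icc 1 n, (1 + α / (k:ℝ)))
      = (∏ k ∈ Finset.Icc 1 n, ((k:ℝ) + α)) / (Nat.factorial n : ℝ) := by
    rw [← hfact, ← Finset.prod_div_distrib]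
    refine Finset.prod_congr rfl fun k hk => ?_
    have hk0 : (k:ℝ) ≠ 0 := Nat.cast_ne_zero.2 (by
      have := (Finset.mem_Icc.1 hk).1; omega)
    field_simp
  have hsign : ((-1:ℝ)) ^ (n+1) * (-1) ^ n = -1 := by
    rw [← pow_add]
    exact Odd.neg_one_pow ⟨n, by ring⟩
  rw [hprod]
  linear_combination (α * (∏ k ∈ Finset.Icc 1 n, ((k:ℝ) + α)) *
    (∫ t in Set.Ioi (0:ℝ), t ^ α * deriv φ t) / (Nat.factorial n : ℝ)) * hsign
end

section
/- For α > 0 let φ(t) = ln(1 + t^{-2α}) and Φ_1(α,t) = -(t² φ''(t))'. Then Φ_1(α,t) = (4α²/t) · [(2α+1) t^{4α} + (1-2α) t^{2α}] / (1 + t^{2α})³; moreover Φ_1(α,t) ≥ 0 for all t > 0 if and only if 0 < α ≤ 1/2. -/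
open Real

theorem stmt18 (α : ℝ) (hα : 0 < α) (φ : ℝ → ℝ)
    (hφ : ∀ t, φ t = Real.log (1 + t ^ (-(2 * α))))
    (Φ₁ : ℝ → ℝ)
    (hΦ₁ : ∀ t, Φ₁ t = -deriv (fun u : ℝ => u ^ 2 * deriv (deriv φ) u) t) :
    (∀ t : ℝ, 0 < t →
      Φ₁ t = 4 * α ^ 2 / t *
        (((2 * α + 1) * t ^ (4 * α) + (1 - 2 * α) * t ^ (2 * α)) /
          (1 + t ^ (2 * α)) ^ 3)) ∧
    ((∀ t : ℝ, 0 < t → 0 ≤ Φ₁ t) ↔ α ≤ 1 / 2) := by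
  -- First derivative of φ on (0,∞)
  set ψ : ℝ → ℝ := fun u => -(2 * α) / (u * (1 + u ^ (2 * α))) with hψdef
  have hd1 : ∀ t : ℝ, 0 < t → HasDerivAt φ (ψ t) t := by
    intro t ht
    have hφfun : φ = fun u : ℝ => Real.log (1 + u ^ (-(2 * α))) := funext hφ
    have h0 : HasDerivAt (fun u : ℝ => 1 + u ^ (-(2 * α)))
        (-(2 * α) * t ^ (-(2 * α) - 1)) t := by
      simpa [Pi.add_def] using (hasDerivAt_const t (1 : ℝ)).add
        (Real.hasDerivAt_rpow_const (p := -(2 * α)) (Or.inl ht.ne'))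
    have hs : (0 : ℝ) < t ^ (2 * α) := Real.rpow_pos_of_pos ht _
    have hs' : (0 : ℝ) < t ^ (-(2 * α)) := Real.rpow_pos_of_pos ht _
    have hne : (1 : ℝ) + t ^ (-(2 * α)) ≠ 0 := by positivity
    have hlog := h0.log hne
    rw [hφfun]
    convert hlog using 1
    have e1 : t ^ (-(2 * α) - 1) = (t ^ (2 * α))⁻¹ / t := by
      rw [Real.rpow_sub ht, Real.rpow_one, Real.rpow_neg ht.le]
    have e2 : t ^ (-(2 * α)) = (t ^ (2 * α))⁻¹ := Real.rpow_neg ht.le _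
    rw [hψdef]
    simp only [e1, e2]
    field_simp
    ring
  -- deriv φ agrees with ψ on (0,∞)
  have hderivφ : ∀ t : ℝ, 0 < t → deriv φ t = ψ t := fun t ht => (hd1 t ht).deriv
  -- second derivative
  have hd2 : ∀ t : ℝ, 0 < t → HasDerivAt ψ
      ((0 * (t * (1 + t ^ (2 * α))) -
        -(2 * α) * (1 * (1 + t ^ (2 * α)) + t * (2 * α * t ^ (2 * α - 1)))) /
        (t * (1 + t ^ (2 * α))) ^ 2) t := by
    intro t ht
    have hs : (0 : ℝ) < t ^ (2 * α) := Real.rpow_pos_of_pos ht _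
    have hden : t * (1 + t ^ (2 * α)) ≠ 0 := by positivity
    have hdend : HasDerivAt (fun u : ℝ => u * (1 + u ^ (2 * α)))
        (1 * (1 + t ^ (2 * α)) + t * (2 * α * t ^ (2 * α - 1))) t := by
      have hb : HasDerivAt (fun u : ℝ => 1 + u ^ (2 * α)) (2 * α * t ^ (2 * α - 1)) t := by
        simpa [Pi.add_def] using (hasDerivAt_const t (1 : ℝ)).add
          (Real.hasDerivAt_rpow_const (p := 2 * α) (Or.inl ht.ne'))
      simpa [Pi.mul_def] using (hasDerivAt_id t).mul hb
    exact (hasDerivAt_const t (-(2 * α))).div hdend hden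
  have hderivψ : ∀ t : ℝ, 0 < t → deriv (deriv φ) t =
      (0 * (t * (1 + t ^ (2 * α))) -
        -(2 * α) * (1 * (1 + t ^ (2 * α)) + t * (2 * α * t ^ (2 * α - 1)))) /
        (t * (1 + t ^ (2 * α))) ^ 2 := by
    intro t ht
    have hev : deriv φ =ᶠ[nhds t] ψ := by
      filter_upwards [IsOpen.mem_nhds isOpen_Ioi ht] with u hu
      exact hderivφ u hu
    rw [hev.deriv_eq]
    exact (hd2 t ht).deriv
  -- the nice form of u ^ 2 * φ'' u
  set g : ℝ → ℝ := fun u =>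
    2 * α * (1 + (2 * α + 1) * u ^ (2 * α)) / (1 + u ^ (2 * α)) ^ 2 with hgdef
  have hg_eq : ∀ u : ℝ, 0 < u → u ^ 2 * deriv (deriv φ) u = g u := by
    intro u hu
    rw [hderivψ u hu, hgdef]
    have hs : (0 : ℝ) < u ^ (2 * α) := Real.rpow_pos_of_pos hu _
    have e3 : u ^ (2 * α - 1) = u ^ (2 * α) / u := by
      rw [Real.rpow_sub hu, Real.rpow_one]
    rw [e3]
    field_simp
    ring
  -- derivative of g
  have hdg : ∀ t : ℝ, 0 < t → HasDerivAt g
      ((2 * α * ((2 * α + 1) * (2 * α * t ^ (2 * α - 1))) * (1 + t ^ (2 * α)) ^ 2 -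
        2 * α * (1 + (2 * α + 1) * t ^ (2 * α)) *
          (2 * (1 + t ^ (2 * α)) ^ 1 * (2 * α * t ^ (2 * α - 1)))) /
        ((1 + t ^ (2 * α)) ^ 2) ^ 2) t := by
    intro t ht
    have hs : (0 : ℝ) < t ^ (2 * α) := Real.rpow_pos_of_pos ht _
    have hb : HasDerivAt (fun u : ℝ => 1 + u ^ (2 * α)) (2 * α * t ^ (2 * α - 1)) t := by
      simpa [Pi.add_def] using (hasDerivAt_const t (1 : ℝ)).add
        (Real.hasDerivAt_rpow_const (p := 2 * α) (Or.inl ht.ne'))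
    have hnum : HasDerivAt (fun u : ℝ => 2 * α * (1 + (2 * α + 1) * u ^ (2 * α)))
        (2 * α * ((2 * α + 1) * (2 * α * t ^ (2 * α - 1)))) t := by
      have : HasDerivAt (fun u : ℝ => 1 + (2 * α + 1) * u ^ (2 * α))
          ((2 * α + 1) * (2 * α * t ^ (2 * α - 1))) t := by
        simpa [Pi.add_def] using (hasDerivAt_const t (1 : ℝ)).add
          ((Real.hasDerivAt_rpow_const (p := 2 * α) (Or.inl ht.ne')).const_mul (2 * α + 1))
      simpa using this.const_mul (2 * α)
    have hden : HasDerivAt (fun u : ℝ => (1 + u ^ (2 * α)) ^ 2)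
        (2 * (1 + t ^ (2 * α)) ^ 1 * (2 * α * t ^ (2 * α - 1))) t := by
      simpa [Pi.pow_def] using hb.pow 2
    have hdne : ((1 : ℝ) + t ^ (2 * α)) ^ 2 ≠ 0 := by positivity
    exact hnum.div hden hdne
  -- the key formula
  have key : ∀ t : ℝ, 0 < t →
      Φ₁ t = 4 * α ^ 2 / t *
        (((2 * α + 1) * t ^ (4 * α) + (1 - 2 * α) * t ^ (2 * α)) /
          (1 + t ^ (2 * α)) ^ 3) := by
    intro t ht
    rw [hΦ₁ t]
    have hev : (fun u : ℝ => u ^ 2 * deriv (deriv φ) u) =ᶠ[nhds t] g := by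
      filter_upwards [IsOpen.mem_nhds isOpen_Ioi ht] with u hu
      exact hg_eq u hu
    rw [hev.deriv_eq, (hdg t ht).deriv]
    have hs : (0 : ℝ) < t ^ (2 * α) := Real.rpow_pos_of_pos ht _
    have e3 : t ^ (2 * α - 1) = t ^ (2 * α) / t := by
      rw [Real.rpow_sub ht, Real.rpow_one]
    have e4 : t ^ (4 * α) = t ^ (2 * α) * t ^ (2 * α) := by
      rw [← Real.rpow_add ht]; ring_nf
    rw [e3, e4]
    field_simp
    ring
  refine ⟨key, ?_⟩
  constructor
  · -- nonnegativity forces α ≤ 1/2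
    intro h
    by_contra hc
    push_neg at hc
    have h2 : (1 : ℝ) / 2 < α := hc
    set ε : ℝ := (2 * α - 1) / (2 * (2 * α + 1)) with hεdef
    have hεpos : 0 < ε := by
      apply div_pos <;> linarith
    set t : ℝ := ε ^ (1 / (2 * α)) with htdef
    have ht : 0 < t := Real.rpow_pos_of_pos hεpos _
    have hts : t ^ (2 * α) = ε := by
      rw [htdef, ← Real.rpow_mul hεpos.le,
        show 1 / (2 * α) * (2 * α) = 1 by field_simp, Real.rpow_one]
    have h4 : t ^ (4 * α) = ε ^ 2 := by
      rw [show (4 : ℝ) * α = 2 * α + 2 * α by ring, Real.rpow_add ht, hts, sq]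
    have hnum : (2 * α + 1) * t ^ (4 * α) + (1 - 2 * α) * t ^ (2 * α) < 0 := by
      rw [h4, hts]
      have : (2 * α + 1) * ε ^ 2 + (1 - 2 * α) * ε = ε * ((2 * α + 1) * ε - (2 * α - 1)) := by
        ring
      rw [this]
      have hlt : (2 * α + 1) * ε - (2 * α - 1) < 0 := by
        rw [hεdef]
        have h21 : (0:ℝ) < 2 * α + 1 := by linarith
        rw [mul_div_assoc']
        rw [mul_comm (2 * α + 1) (2 * α - 1), mul_div_assoc]
        rw [show (2 * α + 1) / (2 * (2 * α + 1)) = 1 / 2 by field_simp]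
        linarith
      exact mul_neg_of_pos_of_neg hεpos hlt
    have hΦneg : Φ₁ t < 0 := by
      rw [key t ht]
      apply mul_neg_of_pos_of_neg
      · positivity
      · apply div_neg_of_neg_of_pos hnum
        have hs : (0 : ℝ) < t ^ (2 * α) := Real.rpow_pos_of_pos ht _
        positivity
    exact absurd (h t ht) (not_le.mpr hΦneg)
  · -- α ≤ 1/2 implies nonnegativity
    intro hle t ht
    rw [key t ht]
    have hs : (0 : ℝ) < t ^ (2 * α) := Real.rpow_pos_of_pos ht _
    have h4 : (0 : ℝ) < t ^ (4 * α) := Real.rpow_pos_of_pos ht _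
    apply mul_nonneg
    · positivity
    · apply div_nonneg
      · apply add_nonneg
        · apply mul_nonneg (by linarith) h4.le
        · apply mul_nonneg (by linarith) hs.le
      · positivity
end
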